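/- arXiv:1603.06181 — 2 statements merged into one kernel-verified Lean document; each statement's English description precedes it below -/
import Mathlib

section
/- Let T > 0 and ϖ ∈ W²,¹([0,T]). Then I_T(f;ϖ) = ∫₀ᵀ f(ϖ,ϖ′,ϖ″) dt is finite if and only if ϖ ∈ W²,²([0,T]). -/
open MeasureTheory Filter Topology Set

noncomputable section

/-- The Landau–Brazovskii integrand `f(x,y,z)`. -/
def fLB (ξ τ γ : ℝ) (x y z : ℝ) : ℝ :=
  ξ ^ 2 / 2 * z ^ 2 - ξ ^ 2 * y ^ 2 + (ξ ^ 2 + τ) / 2 * x ^ 2 - γ / 6 * x ^ 3 + 1 / 24 * x ^ 4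

/-- The Lagrangian `f_λ(x,y,z) = f(x,y,z) - λ·x`. -/
def fLag (ξ τ γ lam : ℝ) (x y z : ℝ) : ℝ := fLB ξ τ γ x y z - lam * x

/-- The energy `I_T(g;w) = ∫₀ᵀ g(w,w',w'')`. -/
def IT (g : ℝ → ℝ → ℝ → ℝ) (w : ℝ → ℝ) (T : ℝ) : ℝ :=
  ∫ t in (0:ℝ)..T, g (w t) (deriv w t) (deriv (deriv w) t)

/-- The average energy `J_T(g;w) = I_T(g;w)/T`. -/
def JT (g : ℝ → ℝ → ℝ → ℝ) (w : ℝ → ℝ) (T : ℝ) : ℝ := IT g w T / T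

/-- Membership in `W^{2,1}([a,b])`: `w` is twice differentiable on `[a,b]`
with integrable second derivative. -/
def MemW21 (a b : ℝ) (w : ℝ → ℝ) : Prop :=
  (∀ t ∈ Set.Icc a b, DifferentiableAt ℝ w t ∧ DifferentiableAt ℝ (deriv w) t) ∧
  IntervalIntegrable (fun t => deriv (deriv w) t) volume a b

/-- Membership in `W^{2,2}([a,b])`: the second derivative is square integrable. -/
def MemW22 (a b : ℝ) (w : ℝ → ℝ) : Prop :=
  (∀ t ∈ Set.Icc a b, DifferentiableAt ℝ w t ∧ DifferentiableAt ℝ (deriv w) t) ∧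
  IntervalIntegrable (fun t => (deriv (deriv w) t) ^ 2) volume a b

/-- The class `E = W^{2,1}_loc(ℝ⁺) ∩ W^{1,∞}(ℝ⁺)`. -/
def MemE (w : ℝ → ℝ) : Prop :=
  (∀ a b : ℝ, 0 ≤ a → a ≤ b → MemW21 a b w) ∧
  ∃ M : ℝ, ∀ t : ℝ, 0 ≤ t → |w t| ≤ M ∧ |deriv w t| ≤ M

/-- The asymptotic mean `[w] = liminf_{T→∞} (1/T)∫₀ᵀ w`. -/
def meanVal (w : ℝ → ℝ) : ℝ := liminf (fun T : ℝ => (∫ t in (0:ℝ)..T, w t) / T) atTop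

/-- The asymptotic average energy `liminf_{T→∞} J_T(g;w)`. -/
def avgE (g : ℝ → ℝ → ℝ → ℝ) (w : ℝ → ℝ) : ℝ := liminf (fun T : ℝ => JT g w T) atTop

/-- Minimal average energy `ψ_g` of the unconstrained problem `ℙ(g)`. -/
def psiU (g : ℝ → ℝ → ℝ → ℝ) : ℝ := sInf {c : ℝ | ∃ w, MemE w ∧ avgE g w = c}

/-- Minimal average energy `ψ_g(a)` of the constrained problem `ℙ(g;a)`. -/
def psiC (g : ℝ → ℝ → ℝ → ℝ) (a : ℝ) : ℝ :=
  sInf {c : ℝ | ∃ w, MemE w ∧ meanVal w = a ∧ avgE g w = c}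

/-- Minimizers of the unconstrained problem `ℙ(g)`. -/
def ThetaU (g : ℝ → ℝ → ℝ → ℝ) : Set (ℝ → ℝ) := {w | MemE w ∧ avgE g w = psiU g}

/-- Minimizers of the constrained problem `ℙ(g;a)`. -/
def ThetaC (g : ℝ → ℝ → ℝ → ℝ) (a : ℝ) : Set (ℝ → ℝ) :=
  {w | MemE w ∧ meanVal w = a ∧ avgE g w = psiC g a}

/-- The minimal average energy `ζ_T(g;x,y)` over `[0,T]` with prescribed boundary data. -/
def zetaT (g : ℝ → ℝ → ℝ → ℝ) (T : ℝ) (x y : ℝ × ℝ) : ℝ :=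
  sInf {c : ℝ | ∃ w, MemW21 0 T w ∧ (w 0, deriv w 0) = x ∧ (w T, deriv w T) = y ∧
    JT g w T = c}

/-- `w` has minimal energy over every compact interval, with its own boundary data. -/
def CompactMinimal (g : ℝ → ℝ → ℝ → ℝ) (w : ℝ → ℝ) : Prop :=
  ∀ T₁ T₂ : ℝ, 0 ≤ T₁ → T₁ < T₂ →
    (∫ t in T₁..T₂, g (w t) (deriv w t) (deriv (deriv w) t)) / (T₂ - T₁) =
      zetaT g (T₂ - T₁) (w T₁, deriv w T₁) (w T₂, deriv w T₂)

/-- Strongly optimal solutions of `ℙ(g)`. -/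
def StronglyOptimal (g : ℝ → ℝ → ℝ → ℝ) (w : ℝ → ℝ) : Prop :=
  MemE w ∧ CompactMinimal g w ∧ avgE g w = psiU g


/-- For `ϖ ∈ W^{2,1}([0,T])`, the energy `I_T(f;ϖ)` is finite (the integrand is
integrable) iff `ϖ ∈ W^{2,2}([0,T])`. -/
theorem energy_finite_iff_W22 (ξ τ γ : ℝ) (hξ : 0 < ξ) (T : ℝ) (hT : 0 < T)
    (w : ℝ → ℝ) (hw : MemW21 0 T w) :
    IntervalIntegrable (fun t => fLB ξ τ γ (w t) (deriv w t) (deriv (deriv w) t))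
      volume 0 T ↔ MemW22 0 T w := by
  obtain ⟨hdiff, hint⟩ := hw
  have hcw : ContinuousOn w (Set.Icc 0 T) := fun t ht =>
    ((hdiff t ht).1.continuousAt).continuousWithinAt
  have hcw' : ContinuousOn (deriv w) (Set.Icc 0 T) := fun t ht =>
    ((hdiff t ht).2.continuousAt).continuousWithinAt
  have hh : IntervalIntegrable (fun t => - ξ ^ 2 * (deriv w t) ^ 2 +
      ((ξ ^ 2 + τ) / 2 * (w t) ^ 2 - γ / 6 * (w t) ^ 3 + 1 / 24 * (w t) ^ 4))
      volume 0 T := by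
    apply ContinuousOn.intervalIntegrable
    rw [Set.uIcc_of_le hT.le]
    fun_prop
  have hξ2 : (ξ : ℝ) ^ 2 ≠ 0 := pow_ne_zero _ hξ.ne'
  constructor
  · intro hf
    refine ⟨hdiff, ?_⟩
    have h1 : IntervalIntegrable (fun t => ξ ^ 2 / 2 * (deriv (deriv w) t) ^ 2)
        volume 0 T := by
      have := hf.sub hh
      refine this.congr ?_
      intro t _
      simp only [fLB]
      ring
    have h2 := h1.const_mul (2 / ξ ^ 2)
    refine h2.congr ?_
    intro t _
    field_simp
  · rintro ⟨-, hz⟩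
    have h1 := (hz.const_mul (ξ ^ 2 / 2)).add hh
    refine h1.congr ?_
    intro t _
    simp only [fLB]
    ring


end
end

section
/- Suppose ψ_f(0) < m_f = inf{f(t,0,0) : t ∈ ℝ}. Let θ_n → 0 and let ϖ̃_n be periodic optimal solutions of ℙ(f;θ_n) with minimal positive periods τ_n, and suppose that ϖ̃_n, ϖ̃_n′ and ϖ̃_n″ converge uniformly on compact sets to ϖ̃, ϖ̃′ and ϖ̃″ respectively. Then τ_n does not converge to 0. -/
open MeasureTheory Filter Topology Set

noncomputable section

namespace PNZhelp

/-! ### Algebraic lemmas about the reduced quartics -/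

/-- reduced quartic `g(x) = f(x,0,0) - ξ²x²/2`. -/
def gR (τ γ : ℝ) (x : ℝ) : ℝ := τ/2*x^2 - γ/6*x^3 + 1/24*x^4

lemma gR_lower (τ γ x : ℝ) : -(12*(γ^2/3 + |τ|/2)^2) ≤ gR τ γ x := by
  have h1 : (0:ℝ) ≤ (x^2 - 4*γ*x)^2 := sq_nonneg _
  have h2 : (0:ℝ) ≤ (x^2 - 24*(γ^2/3 + |τ|/2))^2 := sq_nonneg _
  have h3 : -|τ| ≤ τ := neg_abs_le τ
  have h4 : (0:ℝ) ≤ x^2 := sq_nonneg x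
  unfold gR
  nlinarith [mul_nonneg (abs_nonneg τ) h4]

lemma bddBelow_gR (τ γ : ℝ) : BddBelow (Set.range (gR τ γ)) :=
  ⟨-(12*(γ^2/3 + |τ|/2)^2), by rintro c ⟨x, rfl⟩; exact gR_lower τ γ x⟩

lemma mg_le_zero (τ γ : ℝ) : sInf (Set.range (gR τ γ)) ≤ 0 := by
  have := csInf_le (bddBelow_gR τ γ) (Set.mem_range_self 0)
  simpa [gR] using this

lemma mg_le (τ γ x : ℝ) : sInf (Set.range (gR τ γ)) ≤ gR τ γ x :=
  csInf_le (bddBelow_gR τ γ) (Set.mem_range_self x)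

lemma FLB_eq_gR (ξ τ γ x : ℝ) : fLB ξ τ γ x 0 0 = gR τ γ x + ξ^2/2*x^2 := by
  unfold fLB gR; ring

lemma bddBelow_FLB (ξ τ γ : ℝ) :
    BddBelow (Set.range fun t : ℝ => fLB ξ τ γ t 0 0) := by
  refine ⟨-(12*(γ^2/3 + |τ|/2)^2), ?_⟩
  rintro c ⟨x, rfl⟩
  show _ ≤ fLB ξ τ γ x 0 0
  rw [FLB_eq_gR]
  nlinarith [gR_lower τ γ x, sq_nonneg (ξ*x), sq_nonneg x, sq_nonneg ξ]

lemma mf_le_zero (ξ τ γ : ℝ) :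
    sInf (Set.range fun t : ℝ => fLB ξ τ γ t 0 0) ≤ 0 := by
  have := csInf_le (bddBelow_FLB ξ τ γ) (Set.mem_range_self 0)
  simpa [fLB] using this

lemma mf_le (ξ τ γ x : ℝ) :
    sInf (Set.range fun t : ℝ => fLB ξ τ γ t 0 0) ≤ fLB ξ τ γ x 0 0 :=
  csInf_le (bddBelow_FLB ξ τ γ) (Set.mem_range_self x)

/-! ### liminf lemmas over ℝ with junk-value handling -/

open Filter in
lemma le_liminf_of_le_zero (u : ℝ → ℝ) (c : ℝ) (hc : c ≤ 0)
    (h : ∀ᶠ T in atTop, c ≤ u T) : c ≤ liminf u atTop := by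
  rw [liminf_eq]
  by_cases hA : BddAbove {a : ℝ | ∀ᶠ T in atTop, a ≤ u T}
  · exact le_csSup hA h
  · rw [Real.sSup_of_not_bddAbove hA]; exact hc

open Filter in
lemma liminf_le_liminf_add (u v : ℝ → ℝ) (D cu cv : ℝ)
    (h1 : ∀ᶠ T in atTop, u T ≤ v T + D) (h2 : ∀ᶠ T in atTop, v T ≤ u T + D)
    (hu : ∀ᶠ T in atTop, cu ≤ u T) (hv : ∀ᶠ T in atTop, cv ≤ v T) :
    liminf u atTop ≤ liminf v atTop + D := by
  have hD : 0 ≤ D := by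
    obtain ⟨T, hT1, hT2⟩ := (h1.and h2).exists
    linarith
  rw [liminf_eq, liminf_eq]
  set Au := {a : ℝ | ∀ᶠ T in atTop, a ≤ u T} with hAu
  set Av := {a : ℝ | ∀ᶠ T in atTop, a ≤ v T} with hAv
  have hneu : Au.Nonempty := ⟨cu, hu⟩
  by_cases hbv : BddAbove Av
  · refine csSup_le hneu fun a ha => ?_
    have hav : a - D ∈ Av := by
      filter_upwards [ha, h1] with T h3 h4; linarith
    have := le_csSup hbv hav
    linarith
  · have hbu : ¬ BddAbove Au := by
      intro ⟨b, hb⟩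
      refine hbv ⟨b + D, ?_⟩
      rintro a ha
      have hau : a - D ∈ Au := by
        filter_upwards [ha, h2] with T h3 h4; linarith
      have := hb hau
      linarith
    rw [Real.sSup_of_not_bddAbove hbv, Real.sSup_of_not_bddAbove hbu]
    linarith

open Filter in
lemma liminf_add_const (v : ℝ → ℝ) (c M : ℝ)
    (hb : ∀ᶠ T in atTop, |v T| ≤ M) :
    liminf (fun T => v T + c) atTop = liminf v atTop + c := by
  rw [liminf_eq, liminf_eq]
  set Av := {a : ℝ | ∀ᶠ T in atTop, a ≤ v T} with hAv
  set Au := {a : ℝ | ∀ᶠ T in atTop, a ≤ v T + c} with hAu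
  have hmem : ∀ a : ℝ, a ∈ Au ↔ a - c ∈ Av := by
    intro a
    constructor <;> intro h <;> [skip; skip] <;>
      · filter_upwards [h] with T hT; linarith
  have hvm : ∀ᶠ T in Filter.atTop, -M ≤ v T := by
    filter_upwards [hb] with T hT; exact (abs_le.mp hT).1
  have hnev : Av.Nonempty := ⟨-M, hvm⟩
  have hneu : Au.Nonempty := ⟨-M + c, (hmem _).mpr (by
    show ∀ᶠ T in Filter.atTop, -M + c - c ≤ v T
    filter_upwards [hvm] with T h; linarith)⟩
  have hbv : BddAbove Av := ⟨M, by
    rintro a ha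
    obtain ⟨T, h3, h4⟩ := (ha.and hb).exists
    exact h3.trans (abs_le.mp h4).2⟩
  have hbu : BddAbove Au := ⟨M + c, by
    rintro a ha
    obtain ⟨T, h3, h4⟩ := (((hmem a).mp ha).and hb).exists
    have := h3.trans (abs_le.mp h4).2
    linarith⟩
  apply le_antisymm
  · refine csSup_le hneu fun a ha => ?_
    have := le_csSup hbv ((hmem a).mp ha)
    linarith
  · have : sSup Av ≤ sSup Au - c := by
      refine csSup_le hnev fun a ha => ?_
      have : a + c ∈ Au := (hmem _).mpr (by
        show ∀ᶠ T in Filter.atTop, a + c - c ≤ v T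
        filter_upwards [ha] with T h; linarith)
      have := le_csSup hbu this
      linarith
    linarith

end PNZhelp

namespace PNZhelp2
open Filter MeasureTheory intervalIntegral PNZhelp

/-! ### Integral lemmas -/

lemma contOn_of_W21 {w : ℝ → ℝ} {T : ℝ} (h : MemW21 0 T w) :
    ContinuousOn w (Set.Icc 0 T) :=
  fun t ht => ((h.1 t ht).1.continuousAt).continuousWithinAt

lemma contOn_deriv_of_W21 {w : ℝ → ℝ} {T : ℝ} (h : MemW21 0 T w) :
    ContinuousOn (deriv w) (Set.Icc 0 T) :=
  fun t ht => ((h.1 t ht).2.continuousAt).continuousWithinAt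

lemma integral_ge_local (ξ τ γ : ℝ) {w : ℝ → ℝ} {T : ℝ} (hT : 0 < T) (h : MemW21 0 T w)
    (hi : IntervalIntegrable
      (fun t => fLB ξ τ γ (w t) (deriv w t) (deriv (deriv w) t)) volume 0 T) :
    (∫ t in (0:ℝ)..T, fLB ξ τ γ (w t) 0 0) - ξ^2 * ∫ t in (0:ℝ)..T, (deriv w t)^2
      ≤ ∫ t in (0:ℝ)..T, fLB ξ τ γ (w t) (deriv w t) (deriv (deriv w) t) := by
  have hu : Set.uIcc (0:ℝ) T = Set.Icc 0 T := Set.uIcc_of_le hT.le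
  have hcw := contOn_of_W21 h
  have hcw' := contOn_deriv_of_W21 h
  have hInt : ∀ {φ : ℝ → ℝ}, ContinuousOn φ (Set.Icc 0 T) →
      IntervalIntegrable φ volume 0 T := fun hφ =>
    ContinuousOn.intervalIntegrable (by rw [hu]; exact hφ)
  have hFc : Continuous (fun x : ℝ => fLB ξ τ γ x 0 0) := by unfold fLB; continuity
  have hF : IntervalIntegrable (fun t => fLB ξ τ γ (w t) 0 0) volume 0 T :=
    hInt (hFc.comp_continuousOn hcw)
  have hw1sq : IntervalIntegrable (fun t => (deriv w t)^2) volume 0 T :=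
    hInt (hcw'.pow 2)
  have hr : IntervalIntegrable
      (fun t => fLB ξ τ γ (w t) 0 0 - ξ^2*(deriv w t)^2) volume 0 T :=
    hF.sub (hw1sq.const_mul _)
  have heq : ∀ t, fLB ξ τ γ (w t) (deriv w t) (deriv (deriv w) t)
      - (fLB ξ τ γ (w t) 0 0 - ξ^2*(deriv w t)^2)
      = ξ^2/2*(deriv (deriv w) t)^2 := by
    intro t; unfold fLB; ring
  have h0 : 0 ≤ ∫ t in (0:ℝ)..T,
      (fLB ξ τ γ (w t) (deriv w t) (deriv (deriv w) t)
        - (fLB ξ τ γ (w t) 0 0 - ξ^2*(deriv w t)^2)) := by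
    apply intervalIntegral.integral_nonneg hT.le
    intro t _
    rw [heq t]; positivity
  have hsub := intervalIntegral.integral_sub hi hr
  have hC := intervalIntegral.integral_sub hF (hw1sq.const_mul (ξ^2))
  rw [intervalIntegral.integral_const_mul] at hC
  rw [hsub, hC] at h0
  linarith

set_option maxHeartbeats 1000000 in
lemma integral_ge_global (ξ τ γ : ℝ) {w : ℝ → ℝ} {T M : ℝ} (hξ : 0 < ξ) (hT : 0 < T)
    (h : MemW21 0 T w)
    (hM : ∀ t ∈ Set.Icc 0 T, |w t| ≤ M ∧ |deriv w t| ≤ M) :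
    sInf (Set.range (gR τ γ)) * T - 2*ξ^2*M^2
      ≤ ∫ t in (0:ℝ)..T, fLB ξ τ γ (w t) (deriv w t) (deriv (deriv w) t) := by
  have hmg := mg_le_zero τ γ
  by_cases hi : IntervalIntegrable
      (fun t => fLB ξ τ γ (w t) (deriv w t) (deriv (deriv w) t)) volume 0 T
  · have hu : Set.uIcc (0:ℝ) T = Set.Icc 0 T := Set.uIcc_of_le hT.le
    have hcw := contOn_of_W21 h
    have hcw' := contOn_deriv_of_W21 h
    have hInt : ∀ {φ : ℝ → ℝ}, ContinuousOn φ (Set.Icc 0 T) →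
        IntervalIntegrable φ volume 0 T := fun hφ =>
      ContinuousOn.intervalIntegrable (by rw [hu]; exact hφ)
    have hFc : Continuous (fun x : ℝ => fLB ξ τ γ x 0 0) := by unfold fLB; continuity
    have hgc : Continuous (gR τ γ) := by unfold gR; continuity
    have hF : IntervalIntegrable (fun t => fLB ξ τ γ (w t) 0 0) volume 0 T :=
      hInt (hFc.comp_continuousOn hcw)
    have hg : IntervalIntegrable (fun t => gR τ γ (w t)) volume 0 T :=
      hInt (hgc.comp_continuousOn hcw)
    have hw1sq : IntervalIntegrable (fun t => (deriv w t)^2) volume 0 T :=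
      hInt (hcw'.pow 2)
    have hwsq : IntervalIntegrable (fun t => (w t)^2) volume 0 T :=
      hInt (hcw.pow 2)
    have hr : IntervalIntegrable
        (fun t => fLB ξ τ γ (w t) 0 0 - ξ^2*(deriv w t)^2) volume 0 T :=
      hF.sub (hw1sq.const_mul _)
    have heq : ∀ t, fLB ξ τ γ (w t) (deriv w t) (deriv (deriv w) t)
        - (fLB ξ τ γ (w t) 0 0 - ξ^2*(deriv w t)^2)
        = ξ^2/2*(deriv (deriv w) t)^2 := by
      intro t; unfold fLB; ring
    have hz2' : IntervalIntegrable (fun t => ξ^2/2*(deriv (deriv w) t)^2) volume 0 T := by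
      rw [show (fun t => ξ^2/2*(deriv (deriv w) t)^2)
        = fun t => fLB ξ τ γ (w t) (deriv w t) (deriv (deriv w) t)
          - (fLB ξ τ γ (w t) 0 0 - ξ^2*(deriv w t)^2) from funext fun t => (heq t).symm]
      exact hi.sub hr
    have hz2 : IntervalIntegrable (fun t => (deriv (deriv w) t)^2) volume 0 T := by
      have h2 := hz2'.const_mul (2/ξ^2)
      have hne : ξ ≠ 0 := ne_of_gt hξ
      rw [show (fun t => 2/ξ^2 * (ξ^2/2*(deriv (deriv w) t)^2))
        = fun t => (deriv (deriv w) t)^2 from funext fun t => by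
          field_simp] at h2
      exact h2
    have hzw : IntervalIntegrable (fun t => deriv (deriv w) t * w t) volume 0 T :=
      h.2.mul_continuousOn (by rw [hu]; exact hcw)
    -- FTC for (w' w)' = w'' w + w'^2
    have hftc : ∫ t in (0:ℝ)..T, (deriv (deriv w) t * w t + (deriv w t)^2)
        = deriv w T * w T - deriv w 0 * w 0 := by
      apply intervalIntegral.integral_eq_sub_of_hasDerivAt
        (f := fun s => deriv w s * w s)
      · intro t ht
        rw [hu] at ht
        have h1 := (h.1 t ht).1
        have h2 := (h.1 t ht).2
        have := h2.hasDerivAt.mul h1.hasDerivAt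
        convert this using 1
        · rfl
        · rfl
        · ring
      · exact hzw.add hw1sq
    rw [intervalIntegral.integral_add hzw hw1sq] at hftc
    -- nonnegativity of ∫ (w'' + w)^2
    have h0 : 0 ≤ ∫ t in (0:ℝ)..T, ((deriv (deriv w) t + w t)^2) :=
      intervalIntegral.integral_nonneg hT.le (fun t _ => sq_nonneg _)
    rw [show (fun t => (deriv (deriv w) t + w t)^2)
      = fun t => (deriv (deriv w) t)^2 + (2*(deriv (deriv w) t * w t) + (w t)^2)
      from funext fun t => by ring] at h0
    rw [intervalIntegral.integral_add hz2 ((hzw.const_mul 2).add hwsq),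
      intervalIntegral.integral_add (hzw.const_mul 2) hwsq,
      intervalIntegral.integral_const_mul] at h0
    -- splitting of the energy integral
    have hA := intervalIntegral.integral_sub hi hr
    have hB : ∫ t in (0:ℝ)..T,
        (fLB ξ τ γ (w t) (deriv w t) (deriv (deriv w) t)
          - (fLB ξ τ γ (w t) 0 0 - ξ^2*(deriv w t)^2))
        = ξ^2/2 * ∫ t in (0:ℝ)..T, (deriv (deriv w) t)^2 := by
      rw [show (fun t => fLB ξ τ γ (w t) (deriv w t) (deriv (deriv w) t)
          - (fLB ξ τ γ (w t) 0 0 - ξ^2*(deriv w t)^2))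
        = fun t => ξ^2/2*(deriv (deriv w) t)^2 from funext heq]
      exact intervalIntegral.integral_const_mul _ _
    have hC := intervalIntegral.integral_sub hF (hw1sq.const_mul (ξ^2))
    rw [intervalIntegral.integral_const_mul] at hC
    have hD : ∫ t in (0:ℝ)..T, fLB ξ τ γ (w t) 0 0
        = (∫ t in (0:ℝ)..T, gR τ γ (w t)) + ξ^2/2 * ∫ t in (0:ℝ)..T, (w t)^2 := by
      rw [show (fun t => fLB ξ τ γ (w t) 0 0)
        = fun t => gR τ γ (w t) + ξ^2/2*(w t)^2 from funext fun t => FLB_eq_gR ξ τ γ (w t),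
        intervalIntegral.integral_add hg (hwsq.const_mul _),
        intervalIntegral.integral_const_mul]
    have hE : sInf (Set.range (gR τ γ)) * T ≤ ∫ t in (0:ℝ)..T, gR τ γ (w t) := by
      have := intervalIntegral.integral_mono_on hT.le
        (_root_.intervalIntegrable_const (c := sInf (Set.range (gR τ γ)))) hg
        (fun x _ => mg_le τ γ (w x))
      rw [intervalIntegral.integral_const, smul_eq_mul] at this
      linarith
    -- boundary bounds
    have hbT := hM T ⟨hT.le, le_rfl⟩
    have hb0 := hM 0 ⟨le_rfl, hT.le⟩
    have e1 : deriv w T * w T ≤ M^2 := by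
      calc deriv w T * w T ≤ |deriv w T * w T| := le_abs_self _
        _ = |deriv w T| * |w T| := abs_mul _ _
        _ ≤ M * M := mul_le_mul hbT.2 hbT.1 (abs_nonneg _) ((abs_nonneg _).trans hbT.2)
        _ = M^2 := (sq M).symm
    have e0 : -(M^2) ≤ deriv w 0 * w 0 := by
      have : |deriv w 0 * w 0| ≤ M^2 := by
        calc |deriv w 0 * w 0| = |deriv w 0| * |w 0| := abs_mul _ _
          _ ≤ M * M := mul_le_mul hb0.2 hb0.1 (abs_nonneg _) ((abs_nonneg _).trans hb0.2)
          _ = M^2 := (sq M).symm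
      linarith [neg_abs_le (deriv w 0 * w 0)]
    have hxp : (0:ℝ) ≤ ξ^2/2 := by positivity
    have p1 : 0 ≤ ξ^2/2 * ((∫ t in (0:ℝ)..T, (deriv (deriv w) t)^2)
        + (2*(∫ t in (0:ℝ)..T, deriv (deriv w) t * w t) + ∫ t in (0:ℝ)..T, (w t)^2)) :=
      mul_nonneg hxp (by linarith)
    have hbt : deriv w T * w T - deriv w 0 * w 0 ≤ 2*M^2 := by linarith
    have p2 : ξ^2*(deriv w T * w T - deriv w 0 * w 0) ≤ ξ^2*(2*M^2) :=
      mul_le_mul_of_nonneg_left hbt (by positivity)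
    rw [hB] at hA
    have p2' : ξ^2*((∫ t in (0:ℝ)..T, deriv (deriv w) t * w t)
        + ∫ t in (0:ℝ)..T, (deriv w t)^2) ≤ ξ^2*(2*M^2) := by
      rw [hftc]; exact p2
    linarith [hA, hC, hD, hE, p1, p2']
  · rw [intervalIntegral.integral_undef hi]
    nlinarith [sq_nonneg ξ, sq_nonneg M, mul_nonneg (sq_nonneg ξ) (sq_nonneg M),
      mul_nonpos_of_nonpos_of_nonneg hmg hT.le]

end PNZhelp2

namespace PNZhelp3
open Filter MeasureTheory PNZhelp PNZhelp2

lemma JT_eventually_ge (ξ τ γ : ℝ) (hξ : 0 < ξ) {w : ℝ → ℝ} (hwE : MemE w) :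
    ∀ᶠ T in atTop, sInf (Set.range (gR τ γ)) - 1 ≤ JT (fLB ξ τ γ) w T := by
  obtain ⟨h21, M, hM⟩ := hwE
  filter_upwards [eventually_ge_atTop (max 1 (2*ξ^2*M^2))] with T hTT
  have hT1 : (1:ℝ) ≤ T := le_trans (le_max_left _ _) hTT
  have hT0 : (0:ℝ) < T := lt_of_lt_of_le one_pos hT1
  have hMM : 2*ξ^2*M^2 ≤ T := le_trans (le_max_right _ _) hTT
  have key := integral_ge_global ξ τ γ hξ hT0 (h21 0 T le_rfl hT0.le)
    (fun t ht => hM t ht.1)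
  show _ ≤ IT (fLB ξ τ γ) w T / T
  rw [le_div_iff₀ hT0]
  unfold IT
  nlinarith [key]

lemma avgE_ge (ξ τ γ : ℝ) (hξ : 0 < ξ) {w : ℝ → ℝ} (hwE : MemE w) :
    sInf (Set.range (gR τ γ)) - 1 ≤ avgE (fLB ξ τ γ) w :=
  le_liminf_of_le_zero _ _ (by linarith [mg_le_zero τ γ])
    (JT_eventually_ge ξ τ γ hξ hwE)

lemma bddBelow_S (ξ τ γ : ℝ) (hξ : 0 < ξ) (a : ℝ) :
    BddBelow {c : ℝ | ∃ w, MemE w ∧ meanVal w = a ∧ avgE (fLB ξ τ γ) w = c} :=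
  ⟨sInf (Set.range (gR τ γ)) - 1, by
    rintro c ⟨w, hwE, -, rfl⟩; exact avgE_ge ξ τ γ hξ hwE⟩

lemma memE_const (c : ℝ) : MemE (fun _ : ℝ => c) := by
  have hd : deriv (fun _ : ℝ => c) = fun _ => (0:ℝ) := by
    funext x; exact deriv_const x c
  have hd2 : deriv (deriv (fun _ : ℝ => c)) = fun _ => (0:ℝ) := by
    rw [hd]; funext x; exact deriv_const x 0
  constructor
  · intro a b _ _
    constructor
    · intro t _
      refine ⟨differentiableAt_const c, ?_⟩
      rw [hd]; exact differentiableAt_const 0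
    · rw [hd2]; exact _root_.intervalIntegrable_const
  · exact ⟨|c|, fun t _ => ⟨le_rfl, by rw [hd]; simp⟩⟩

lemma meanVal_zero_fun : meanVal (fun _ : ℝ => (0:ℝ)) = 0 := by
  unfold meanVal
  rw [show (fun T : ℝ => (∫ _ in (0:ℝ)..T, (0:ℝ)) / T) = fun _ : ℝ => (0:ℝ)
    from funext fun T => by simp]
  exact liminf_const 0

lemma deriv_shift (w : ℝ → ℝ) (θ : ℝ) : deriv (fun t => w t + θ) = deriv w :=
  funext fun t => deriv_add_const θ

lemma memE_add_const {w : ℝ → ℝ} (hwE : MemE w) (θ : ℝ) :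
    MemE (fun t => w t + θ) := by
  obtain ⟨h21, M, hM⟩ := hwE
  refine ⟨?_, M + |θ|, ?_⟩
  · intro a b ha hab
    obtain ⟨hd, hint⟩ := h21 a b ha hab
    constructor
    · intro t ht
      refine ⟨(hd t ht).1.add_const θ, ?_⟩
      rw [deriv_shift]; exact (hd t ht).2
    · rw [deriv_shift]; exact hint
  · intro t ht
    refine ⟨?_, ?_⟩
    · calc |w t + θ| ≤ |w t| + |θ| := abs_add_le _ _
        _ ≤ M + |θ| := by linarith [(hM t ht).1]
    · rw [deriv_shift]
      linarith [(hM t ht).2, abs_nonneg θ]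

/-- Shift constant for the Lipschitz-in-`x` bound of `fLB`. -/
def shiftC (ξ τ γ M : ℝ) : ℝ :=
  |ξ^2+τ|/2*(2*M+1) + |γ|/6*(3*M^2+3*M+1) + (4*M^3+6*M^2+4*M+1)/24

lemma shiftC_nonneg {ξ τ γ M : ℝ} (hM : 0 ≤ M) : 0 ≤ shiftC ξ τ γ M := by
  unfold shiftC
  have h1 : (0:ℝ) ≤ |ξ^2+τ|/2*(2*M+1) :=
    mul_nonneg (by positivity) (by linarith)
  have h2 : (0:ℝ) ≤ |γ|/6*(3*M^2+3*M+1) :=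
    mul_nonneg (by positivity) (by nlinarith)
  have h3 : (0:ℝ) ≤ (4*M^3+6*M^2+4*M+1)/24 := by
    have : (0:ℝ) ≤ M^3 := by positivity
    have : (0:ℝ) ≤ M^2 := by positivity
    nlinarith [pow_nonneg hM 3, pow_nonneg hM 2]
  linarith

lemma abs_sub_add_le (a b c : ℝ) : |a - b + c| ≤ |a| + |b| + |c| := by
  calc |a - b + c| ≤ |a - b| + |c| := abs_add_le _ _
    _ ≤ |a| + |b| + |c| := by
        have : |a - b| ≤ |a| + |b| := by
          rw [sub_eq_add_neg]
          exact (abs_add_le _ _).trans (by rw [abs_neg])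
        linarith

set_option maxHeartbeats 1000000 in
lemma fLB_shift_bound (ξ τ γ : ℝ) {M x θ : ℝ} (hx : |x| ≤ M) (hθ : |θ| ≤ 1)
    (y z : ℝ) :
    |fLB ξ τ γ (x+θ) y z - fLB ξ τ γ x y z| ≤ shiftC ξ τ γ M * |θ| := by
  have hM : 0 ≤ M := (abs_nonneg x).trans hx
  have hQ : fLB ξ τ γ (x+θ) y z - fLB ξ τ γ x y z
      = ((ξ^2+τ)/2*(2*x+θ) - γ/6*(3*x^2+3*x*θ+θ^2)
          + 1/24*(4*x^3+6*x^2*θ+4*x*θ^2+θ^3)) * θ := by unfold fLB; ring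
  rw [hQ, abs_mul]
  apply mul_le_mul_of_nonneg_right ?_ (abs_nonneg θ)
  have hx2 : |x|^2 ≤ M^2 := pow_le_pow_left₀ (abs_nonneg x) hx 2
  have hx3 : |x|^3 ≤ M^3 := pow_le_pow_left₀ (abs_nonneg x) hx 3
  have hθ2 : |θ|^2 ≤ 1 := by nlinarith [abs_nonneg θ]
  have hθ3 : |θ|^3 ≤ 1 := by nlinarith [abs_nonneg θ, pow_nonneg (abs_nonneg θ) 2]
  have hxθ : |x| *|θ| ≤ M := by nlinarith [abs_nonneg x, abs_nonneg θ]
  have t1 : |(ξ^2+τ)/2*(2*x+θ)| ≤ |ξ^2+τ|/2*(2*M+1) := by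
    rw [abs_mul, abs_div, abs_two]
    apply mul_le_mul_of_nonneg_left ?_ (by positivity)
    calc |2*x+θ| ≤ |2*x| + |θ| := abs_add_le _ _
      _ = 2*|x| + |θ| := by rw [abs_mul, abs_two]
      _ ≤ 2*M+1 := by linarith
  have t2 : |γ/6*(3*x^2+3*x*θ+θ^2)| ≤ |γ|/6*(3*M^2+3*M+1) := by
    rw [abs_mul, show |γ/6| = |γ|/6 by rw [abs_div]; norm_num]
    apply mul_le_mul_of_nonneg_left ?_ (by positivity)
    calc |3*x^2+3*x*θ+θ^2| ≤ |3*x^2| + |3*x*θ| + |θ^2| := by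
          calc |3*x^2+3*x*θ+θ^2| ≤ |3*x^2+3*x*θ| + |θ^2| := abs_add_le _ _
            _ ≤ |3*x^2| + |3*x*θ| + |θ^2| := by linarith [abs_add_le (3*x^2) (3*x*θ)]
      _ = 3*|x|^2 + 3*(|x| *|θ|) + |θ|^2 := by
          rw [abs_mul, abs_mul, abs_mul, abs_pow, abs_pow]; norm_num; ring
      _ ≤ 3*M^2+3*M+1 := by linarith
  have t3 : |1/24*(4*x^3+6*x^2*θ+4*x*θ^2+θ^3)| ≤ (4*M^3+6*M^2+4*M+1)/24 := by
    rw [abs_mul, show |(1:ℝ)/24| = 1/24 by norm_num]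
    rw [show (4*M^3+6*M^2+4*M+1)/24 = 1/24*(4*M^3+6*M^2+4*M+1) by ring]
    apply mul_le_mul_of_nonneg_left ?_ (by norm_num)
    have habs : |4*x^3+6*x^2*θ+4*x*θ^2+θ^3|
        ≤ |4*x^3| + |6*x^2*θ| + |4*x*θ^2| + |θ^3| := by
      calc |4*x^3+6*x^2*θ+4*x*θ^2+θ^3|
          ≤ |4*x^3+6*x^2*θ+4*x*θ^2| + |θ^3| := abs_add_le _ _
        _ ≤ |4*x^3+6*x^2*θ| + |4*x*θ^2| + |θ^3| := by
            linarith [abs_add_le (4*x^3+6*x^2*θ) (4*x*θ^2)]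
        _ ≤ |4*x^3| + |6*x^2*θ| + |4*x*θ^2| + |θ^3| := by
            linarith [abs_add_le (4*x^3) (6*x^2*θ)]
    have e : |4*x^3| + |6*x^2*θ| + |4*x*θ^2| + |θ^3|
        = 4*|x|^3 + 6*(|x|^2*|θ|) + 4*(|x| *|θ|^2) + |θ|^3 := by
      simp only [abs_mul, abs_pow]; norm_num; ring
    have b1 : |x|^2*|θ| ≤ M^2 := by nlinarith [pow_nonneg (abs_nonneg x) 2]
    have b2 : |x| *|θ|^2 ≤ M := by nlinarith [abs_nonneg x, pow_nonneg (abs_nonneg θ) 2]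
    rw [e] at habs
    linarith
  unfold shiftC
  calc |(ξ^2+τ)/2*(2*x+θ) - γ/6*(3*x^2+3*x*θ+θ^2)
        + 1/24*(4*x^3+6*x^2*θ+4*x*θ^2+θ^3)|
      ≤ |(ξ^2+τ)/2*(2*x+θ)| + |γ/6*(3*x^2+3*x*θ+θ^2)|
        + |1/24*(4*x^3+6*x^2*θ+4*x*θ^2+θ^3)| := abs_sub_add_le _ _ _
    _ ≤ _ := by linarith

end PNZhelp3

namespace PNZhelp4
open Filter MeasureTheory PNZhelp PNZhelp2 PNZhelp3

set_option maxHeartbeats 1000000 in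
lemma psiC_upper (ξ τ γ : ℝ) (hξ : 0 < ξ) (w₀ : ℝ → ℝ) (M₀ : ℝ)
    (hw₀E : MemE w₀) (hM₀ : ∀ t : ℝ, 0 ≤ t → |w₀ t| ≤ M₀ ∧ |deriv w₀ t| ≤ M₀)
    (hw₀m : meanVal w₀ = 0)
    (ϑ : ℝ) (hϑ : |ϑ| ≤ 1) :
    psiC (fLB ξ τ γ) ϑ ≤ avgE (fLB ξ τ γ) w₀ + shiftC ξ τ γ M₀ * |ϑ| := by
  set C := shiftC ξ τ γ M₀ with hCdef
  have hM₀0 : 0 ≤ M₀ := (abs_nonneg _).trans (hM₀ 0 le_rfl).1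
  have hC0 : 0 ≤ C := shiftC_nonneg hM₀0
  have hwE' : MemE (fun t => w₀ t + ϑ) := memE_add_const hw₀E ϑ
  -- its mean value
  have hmean' : meanVal (fun t => w₀ t + ϑ) = ϑ := by
    have hev : ∀ᶠ T in atTop, (∫ t in (0:ℝ)..T, (w₀ t + ϑ)) / T
        = (∫ t in (0:ℝ)..T, w₀ t) / T + ϑ := by
      filter_upwards [eventually_ge_atTop (1:ℝ)] with T hT1
      have hT0 : (0:ℝ) < T := lt_of_lt_of_le one_pos hT1
      have hint : IntervalIntegrable w₀ volume 0 T :=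
        ContinuousOn.intervalIntegrable (by
          rw [Set.uIcc_of_le hT0.le]
          exact contOn_of_W21 (hw₀E.1 0 T le_rfl hT0.le))
      rw [intervalIntegral.integral_add hint (_root_.intervalIntegrable_const),
        intervalIntegral.integral_const, smul_eq_mul]
      field_simp
      ring
    have hb : ∀ᶠ T in atTop, |(∫ t in (0:ℝ)..T, w₀ t)/T| ≤ M₀ := by
      filter_upwards [eventually_ge_atTop (1:ℝ)] with T hT1
      have hT0 : (0:ℝ) < T := lt_of_lt_of_le one_pos hT1
      have hbnd : ‖∫ t in (0:ℝ)..T, w₀ t‖ ≤ M₀*|T - 0| :=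
        intervalIntegral.norm_integral_le_of_norm_le_const (fun x hx => by
          have hx0 : 0 ≤ x := by
            rw [Set.uIoc_of_le hT0.le] at hx; exact hx.1.le
          simpa [Real.norm_eq_abs] using (hM₀ x hx0).1)
      rw [Real.norm_eq_abs] at hbnd
      rw [abs_div, abs_of_pos hT0, div_le_iff₀ hT0]
      simpa [abs_of_pos hT0] using hbnd
    unfold meanVal
    rw [liminf_congr hev, PNZhelp.liminf_add_const _ ϑ M₀ hb]
    unfold meanVal at hw₀m
    rw [hw₀m, zero_add]
  -- energy comparison along the shift
  have hd1 : deriv (fun t => w₀ t + ϑ) = deriv w₀ := deriv_shift w₀ ϑ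
  have hJT : ∀ᶠ T in atTop,
      |JT (fLB ξ τ γ) (fun t => w₀ t + ϑ) T - JT (fLB ξ τ γ) w₀ T| ≤ C*|ϑ| := by
    filter_upwards [eventually_ge_atTop (1:ℝ)] with T hT1
    have hT0 : (0:ℝ) < T := lt_of_lt_of_le one_pos hT1
    have hITs : IT (fLB ξ τ γ) (fun t => w₀ t + ϑ) T
        = ∫ t in (0:ℝ)..T, fLB ξ τ γ (w₀ t + ϑ) (deriv w₀ t) (deriv (deriv w₀) t) := by
      unfold IT
      congr 1
      funext t
      simp only [hd1]
    set d : ℝ → ℝ := fun t => fLB ξ τ γ (w₀ t + ϑ) 0 0 - fLB ξ τ γ (w₀ t) 0 0 with hddef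
    have hpt : (fun t => fLB ξ τ γ (w₀ t + ϑ) (deriv w₀ t) (deriv (deriv w₀) t))
        = fun t => fLB ξ τ γ (w₀ t) (deriv w₀ t) (deriv (deriv w₀) t) + d t := by
      funext t
      simp only [hddef]
      unfold fLB
      ring
    have hdb : ∀ t : ℝ, 0 ≤ t → |d t| ≤ C*|ϑ| := by
      intro t ht
      simp only [hddef]
      have h := fLB_shift_bound ξ τ γ (hM₀ t ht).1 hϑ 0 0
      exact h
    have hdc : IntervalIntegrable d volume 0 T := by
      apply ContinuousOn.intervalIntegrable
      rw [Set.uIcc_of_le hT0.le]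
      have hP : Continuous (fun x : ℝ => fLB ξ τ γ (x + ϑ) 0 0 - fLB ξ τ γ x 0 0) := by
        unfold fLB; continuity
      exact hP.comp_continuousOn (contOn_of_W21 (hw₀E.1 0 T le_rfl hT0.le))
    have hITbnd : |IT (fLB ξ τ γ) (fun t => w₀ t + ϑ) T - IT (fLB ξ τ γ) w₀ T|
        ≤ C*|ϑ| *T := by
      by_cases hbase : IntervalIntegrable
          (fun t => fLB ξ τ γ (w₀ t) (deriv w₀ t) (deriv (deriv w₀) t)) volume 0 T
      · have heq : IT (fLB ξ τ γ) (fun t => w₀ t + ϑ) T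
            = IT (fLB ξ τ γ) w₀ T + ∫ t in (0:ℝ)..T, d t := by
          rw [hITs, hpt, intervalIntegral.integral_add hbase hdc]
          rfl
        rw [heq]
        have hdint : ‖∫ t in (0:ℝ)..T, d t‖ ≤ C*|ϑ| *|T - 0| :=
          intervalIntegral.norm_integral_le_of_norm_le_const (fun x hx => by
            have hx0 : 0 ≤ x := by
              rw [Set.uIoc_of_le hT0.le] at hx; exact hx.1.le
            simpa [Real.norm_eq_abs] using hdb x hx0)
        rw [Real.norm_eq_abs] at hdint
        simpa [abs_of_pos hT0] using hdint
      · have hshift : ¬ IntervalIntegrable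
            (fun t => fLB ξ τ γ (w₀ t + ϑ) (deriv w₀ t) (deriv (deriv w₀) t))
            volume 0 T := by
          intro hcon
          apply hbase
          have hsd := hcon.sub hdc
          rw [show (fun t => fLB ξ τ γ (w₀ t + ϑ) (deriv w₀ t) (deriv (deriv w₀) t) - d t)
            = fun t => fLB ξ τ γ (w₀ t) (deriv w₀ t) (deriv (deriv w₀) t) from by
              funext t; simp only [hddef]; unfold fLB; ring] at hsd
          exact hsd
        have e1 : IT (fLB ξ τ γ) (fun t => w₀ t + ϑ) T = 0 := by
          rw [hITs]; exact intervalIntegral.integral_undef hshift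
        have e2 : IT (fLB ξ τ γ) w₀ T = 0 :=
          intervalIntegral.integral_undef hbase
        rw [e1, e2]
        simp only [sub_zero, abs_zero]
        positivity
    unfold JT
    rw [div_sub_div_same, abs_div, abs_of_pos hT0, div_le_iff₀ hT0]
    exact hITbnd
  have h1 : ∀ᶠ T in atTop, JT (fLB ξ τ γ) (fun t => w₀ t + ϑ) T
      ≤ JT (fLB ξ τ γ) w₀ T + C*|ϑ| := by
    filter_upwards [hJT] with T h; have := (abs_le.mp h).2; linarith
  have h2 : ∀ᶠ T in atTop, JT (fLB ξ τ γ) w₀ T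
      ≤ JT (fLB ξ τ γ) (fun t => w₀ t + ϑ) T + C*|ϑ| := by
    filter_upwards [hJT] with T h; have := (abs_le.mp h).1; linarith
  have hcomp : avgE (fLB ξ τ γ) (fun t => w₀ t + ϑ) ≤ avgE (fLB ξ τ γ) w₀ + C*|ϑ| := by
    unfold avgE
    exact PNZhelp.liminf_le_liminf_add _ _ _
      (sInf (Set.range (gR τ γ)) - 1) (sInf (Set.range (gR τ γ)) - 1)
      h1 h2 (JT_eventually_ge ξ τ γ hξ hwE')
      (JT_eventually_ge ξ τ γ hξ hw₀E)
  have hmem : avgE (fLB ξ τ γ) (fun t => w₀ t + ϑ)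
      ∈ {c : ℝ | ∃ v, MemE v ∧ meanVal v = ϑ ∧ avgE (fLB ξ τ γ) v = c} :=
    ⟨fun t => w₀ t + ϑ, hwE', hmean', rfl⟩
  have hle := csInf_le (bddBelow_S ξ τ γ hξ ϑ) hmem
  unfold psiC
  exact hle.trans hcomp

end PNZhelp4

set_option maxHeartbeats 1000000 in
/-- If `ψ_f(0) < m_f`, the minimal periods of periodic optimal solutions of `ℙ(f;θ_n)`
with `θ_n → 0`, converging in `C²` on compacts, do not tend to `0`. -/
theorem periods_not_tendsto_zero (ξ τ γ : ℝ) (hξ : 0 < ξ)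
    (hlt : psiC (fLB ξ τ γ) 0 < sInf (Set.range fun t : ℝ => fLB ξ τ γ t 0 0))
    (θ : ℕ → ℝ) (hθ : Tendsto θ atTop (nhds 0))
    (w : ℕ → ℝ → ℝ) (τp : ℕ → ℝ) (wl : ℝ → ℝ)
    (hw : ∀ n, w n ∈ ThetaC (fLB ξ τ γ) (θ n))
    (hper : ∀ n, 0 < τp n ∧ Function.Periodic (w n) (τp n) ∧
      ∀ p : ℝ, 0 < p → Function.Periodic (w n) p → τp n ≤ p)
    (hmean : ∀ n, (∫ s in (0:ℝ)..(τp n), w n s) / τp n = θ n)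
    (henergy : ∀ n, (∫ s in (0:ℝ)..(τp n),
        fLB ξ τ γ (w n s) (deriv (w n) s) (deriv (deriv (w n)) s)) / τp n =
      psiC (fLB ξ τ γ) (θ n))
    (hconv : TendstoLocallyUniformly w wl atTop)
    (hconv' : TendstoLocallyUniformly (fun n => deriv (w n)) (deriv wl) atTop)
    (hconv'' : TendstoLocallyUniformly (fun n => deriv (deriv (w n))) (deriv (deriv wl))
      atTop) :
    ¬ Tendsto τp atTop (nhds 0) := by
  intro hT
  classical
  set mf := sInf (Set.range fun t : ℝ => fLB ξ τ γ t 0 0) with hmfdef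
  -- a near-optimal competitor for the zero-mean problem
  have hS0ne : {c : ℝ | ∃ v, MemE v ∧ meanVal v = 0 ∧ avgE (fLB ξ τ γ) v = c}.Nonempty :=
    ⟨avgE (fLB ξ τ γ) (fun _ => 0),
      ⟨fun _ => 0, PNZhelp3.memE_const 0, PNZhelp3.meanVal_zero_fun, rfl⟩⟩
  unfold psiC at hlt
  obtain ⟨c₀, ⟨w₀, hw₀E, hw₀m, hw₀a⟩, hc₀⟩ := exists_lt_of_csInf_lt hS0ne hlt
  obtain ⟨M₀, hM₀⟩ := hw₀E.2
  set C := PNZhelp3.shiftC ξ τ γ M₀ with hCdef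
  have hM₀0 : 0 ≤ M₀ := (abs_nonneg _).trans (hM₀ 0 le_rfl).1
  have hC0 : 0 ≤ C := PNZhelp3.shiftC_nonneg hM₀0
  set ε := mf - c₀ with hεdef
  have hε : 0 < ε := by rw [hεdef]; linarith
  set r := Real.sqrt (ε/(2*ξ^2)) with hrdef
  have hr2 : r^2 = ε/(2*ξ^2) := Real.sq_sqrt (by positivity)
  have hrpos : 0 < r := Real.sqrt_pos.mpr (by positivity)
  have hxr : ξ^2*r^2 = ε/2 := by rw [hr2]; field_simp
  have hup : ∀ ϑ : ℝ, |ϑ| ≤ 1 → psiC (fLB ξ τ γ) ϑ ≤ c₀ + C * |ϑ| := by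
    intro ϑ hϑ
    have := PNZhelp4.psiC_upper ξ τ γ hξ w₀ M₀ hw₀E (fun t ht => hM₀ t ht) hw₀m ϑ hϑ
    rw [hw₀a] at this
    exact this
  -- uniform-convergence machinery on [0,1]
  have hwnE : ∀ n, MemE (w n) := fun n => (hw n).1
  have hW21 : ∀ n, MemW21 0 1 (w n) := fun n => (hwnE n).1 0 1 le_rfl zero_le_one
  have hcontd : ∀ n, ContinuousOn (deriv (w n)) (Set.Icc (0:ℝ) 1) := fun n =>
    PNZhelp2.contOn_deriv_of_W21 (hW21 n)
  have hTLU : TendstoLocallyUniformlyOn (fun n => deriv (w n)) (deriv wl) atTop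
      (Set.Icc (0:ℝ) 1) :=
    (hconv'.tendstoLocallyUniformlyOn).mono (Set.subset_univ _)
  have hgc : ContinuousOn (deriv wl) (Set.Icc (0:ℝ) 1) :=
    hTLU.continuousOn (Filter.Eventually.of_forall hcontd).frequently
  have hTU : TendstoUniformlyOn (fun n => deriv (w n)) (deriv wl) atTop
      (Set.Icc (0:ℝ) 1) :=
    (tendstoLocallyUniformlyOn_iff_tendstoUniformlyOn_of_compact isCompact_Icc).mp hTLU
  have hUC := isCompact_Icc.uniformContinuousOn_of_continuous hgc
  rw [Metric.uniformContinuousOn_iff] at hUC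
  obtain ⟨η, hη, hUC⟩ := hUC (r/3) (by positivity)
  have hTUev := Metric.tendstoUniformlyOn_iff.mp hTU (r/3) (by positivity)
  have hsmall : ∀ᶠ n in atTop, τp n < min η 1 := by
    have hpos : (0:ℝ) < min η 1 := lt_min hη one_pos
    filter_upwards [hT (Iio_mem_nhds hpos)] with n hn
    exact hn
  have hθ1 : ∀ᶠ n in atTop, |θ n| ≤ 1 := by
    have habs : Tendsto (fun n => |θ n|) atTop (nhds 0) := by
      simpa using hθ.abs
    filter_upwards [habs (Iio_mem_nhds one_pos)] with n hn
    exact le_of_lt hn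
  have hθs : ∀ᶠ n in atTop, C * |θ n| < ε/2 := by
    have h0 : Tendsto (fun n => |θ n|) atTop (nhds 0) := by
      simpa using hθ.abs
    have h1 : Tendsto (fun n => C * |θ n|) atTop (nhds 0) := by
      simpa using h0.const_mul C
    filter_upwards [h1 (Iio_mem_nhds (half_pos hε))] with n hn
    exact hn
  obtain ⟨n, hn1, hn2, hn3, hn4⟩ := (hsmall.and (hTUev.and (hθs.and hθ1))).exists
  -- lower bound for ψ_f(θ n)
  have hτpos : 0 < τp n := (hper n).1
  have hτ1 : τp n ≤ 1 := le_of_lt (lt_of_lt_of_le hn1 (min_le_right _ _))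
  have hτη : τp n < η := lt_of_lt_of_le hn1 (min_le_left _ _)
  have hsub : Set.Icc 0 (τp n) ⊆ Set.Icc (0:ℝ) 1 := Set.Icc_subset_Icc le_rfl hτ1
  have hcw : ContinuousOn (w n) (Set.Icc 0 (τp n)) :=
    (PNZhelp2.contOn_of_W21 (hW21 n)).mono hsub
  have hper0 : w n 0 = w n (τp n) := by
    have h := (hper n).2.1 0
    rw [zero_add] at h
    exact h.symm
  obtain ⟨c, hcmem, hc0⟩ := exists_deriv_eq_zero hτpos hcw hper0
  have hderb : ∀ t ∈ Set.Icc 0 (τp n), |deriv (w n) t| ≤ r := by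
    intro t ht
    have htS : t ∈ Set.Icc (0:ℝ) 1 := hsub ht
    have hcS : c ∈ Set.Icc (0:ℝ) 1 := hsub (Set.Ioo_subset_Icc_self hcmem)
    have b1 : dist (deriv wl t) (deriv (w n) t) < r/3 := hn2 t htS
    have b2 : dist (deriv wl c) (deriv (w n) c) < r/3 := hn2 c hcS
    have b3 : dist (deriv wl t) (deriv wl c) < r/3 := by
      apply hUC t htS c hcS
      rw [Real.dist_eq]
      have h1 := ht.1
      have h2 := ht.2
      have h3 := hcmem.1
      have h4 := hcmem.2
      have habs : |t - c| ≤ τp n := abs_le.mpr ⟨by linarith, by linarith⟩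
      linarith
    have hre : |deriv (w n) t| = dist (deriv (w n) t) (deriv (w n) c) := by
      rw [hc0, Real.dist_eq, sub_zero]
    rw [hre]
    calc dist (deriv (w n) t) (deriv (w n) c)
        ≤ dist (deriv (w n) t) (deriv wl t) + dist (deriv wl t) (deriv wl c)
          + dist (deriv wl c) (deriv (w n) c) := dist_triangle4 _ _ _ _
      _ ≤ r := by
          rw [dist_comm (deriv (w n) t) (deriv wl t)]
          linarith
  have hw21τ : MemW21 0 (τp n) (w n) := (hwnE n).1 0 (τp n) le_rfl hτpos.le
  have hlow : (mf - ε/2) * τp n ≤ ∫ t in (0:ℝ)..(τp n),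
      fLB ξ τ γ (w n t) (deriv (w n) t) (deriv (deriv (w n)) t) := by
    by_cases hi : IntervalIntegrable
        (fun t => fLB ξ τ γ (w n t) (deriv (w n) t) (deriv (deriv (w n)) t))
        volume 0 (τp n)
    · have key := PNZhelp2.integral_ge_local ξ τ γ hτpos hw21τ hi
      have hu : Set.uIcc (0:ℝ) (τp n) = Set.Icc 0 (τp n) := Set.uIcc_of_le hτpos.le
      have hFc : Continuous (fun x : ℝ => fLB ξ τ γ x 0 0) := by unfold fLB; continuity
      have hF : IntervalIntegrable (fun t => fLB ξ τ γ (w n t) 0 0) volume 0 (τp n) :=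
        ContinuousOn.intervalIntegrable (by
          rw [hu]; exact hFc.comp_continuousOn hcw)
      have hw1sq : IntervalIntegrable (fun t => (deriv (w n) t)^2) volume 0 (τp n) :=
        ContinuousOn.intervalIntegrable (by
          rw [hu]
          exact ((PNZhelp2.contOn_deriv_of_W21 (hW21 n)).mono hsub).pow 2)
      have hFm : mf * τp n ≤ ∫ t in (0:ℝ)..(τp n), fLB ξ τ γ (w n t) 0 0 := by
        have h := intervalIntegral.integral_mono_on hτpos.le
          (_root_.intervalIntegrable_const (c := mf)) hF
          (fun x _ => PNZhelp.mf_le ξ τ γ (w n x))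
        rw [intervalIntegral.integral_const, smul_eq_mul] at h
        linarith
      have hw2 : ∫ t in (0:ℝ)..(τp n), (deriv (w n) t)^2 ≤ r^2 * τp n := by
        have h := intervalIntegral.integral_mono_on hτpos.le hw1sq
          (_root_.intervalIntegrable_const (c := r^2))
          (fun x hx => by
            have hab := abs_le.mp (hderb x hx)
            exact sq_le_sq' hab.1 hab.2)
        rw [intervalIntegral.integral_const, smul_eq_mul] at h
        linarith
      have hmul : ξ^2 * ∫ t in (0:ℝ)..(τp n), (deriv (w n) t)^2
          ≤ ξ^2 * (r^2 * τp n) := mul_le_mul_of_nonneg_left hw2 (by positivity)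
      have heps : ξ^2 * (r^2 * τp n) = ε/2 * τp n := by
        rw [← hxr]; ring
      linarith
    · rw [intervalIntegral.integral_undef hi]
      have hmf0 : mf ≤ 0 := PNZhelp.mf_le_zero ξ τ γ
      nlinarith
  have hpsi_n := henergy n
  have hlow' : mf - ε/2 ≤ psiC (fLB ξ τ γ) (θ n) := by
    rw [← hpsi_n, le_div_iff₀ hτpos]
    linarith
  have hup' := hup (θ n) hn4
  have hfin : mf - ε/2 ≤ c₀ + ε/2 - (ε/2 - C * |θ n|) := by
    have := hlow'.trans hup'
    linarith
  rw [hεdef] at hfin hn3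
  linarith


end
end
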